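/- Let (A, σ) be a submultiplicative seminormed unital commutative ℝ-algebra, d ∈ ℕ, and M a 2d-power module of A (not necessarily Archimedean). Then the closure of M with respect to the σ-topology equals Pos(X_M ∩ sp(σ)), i.e. cl_σ(M) = {a ∈ A : â ≥ 0 on X_M ∩ sp(σ)}. -/

import Mathlib

/-- The character space `X(A)` topologized by the weakest topology making all Gelfand
transforms continuous. -/
noncomputable instance charSpaceTopology (A : Type*) [CommRing A] [Algebra ℝ A] :
    TopologicalSpace (A →ₐ[ℝ] ℝ) :=
  TopologicalSpace.induced (fun (α : A →ₐ[ℝ] ℝ) (a : A) => α a) Pi.topologicalSpace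

/-- The locally convex topology on `A` induced by a single seminorm `σ`. -/
noncomputable def seminormTopology {A : Type*} [CommRing A] [Algebra ℝ A]
    (σ : Seminorm ℝ A) : TopologicalSpace A :=
  (SeminormFamily.moduleFilterBasis (fun _ : Unit => σ)).topology

/-- A `2d`-power module of `A`. -/
def IsPowerModule {A : Type*} [CommRing A] [Algebra ℝ A] (d : ℕ) (M : Set A) : Prop :=
  (1 : A) ∈ M ∧ (∀ x ∈ M, ∀ y ∈ M, x + y ∈ M) ∧ ∀ a : A, ∀ x ∈ M, a ^ (2 * d) * x ∈ M

section Aux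

variable {A : Type*} [CommRing A] [Algebra ℝ A]

theorem withSeminorms_st (σ : Seminorm ℝ A) :
    @WithSeminorms ℝ A Unit _ _ _ (fun _ : Unit => σ) (seminormTopology σ) := by
  letI := seminormTopology σ
  exact ⟨rfl⟩

theorem sup_le_sem (σ : Seminorm ℝ A) (s : Finset Unit) (x : A) :
    (s.sup (fun _ : Unit => σ)) x ≤ σ x := by
  have : s.sup (fun _ : Unit => σ) ≤ σ := Finset.sup_le fun _ _ => le_rfl
  exact this x

theorem seminorm_sum_le (σ : Seminorm ℝ A) {ι : Type*} (s : Finset ι) (f : ι → A) :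
    σ (∑ i ∈ s, f i) ≤ ∑ i ∈ s, σ (f i) := by
  classical
  induction s using Finset.cons_induction with
  | empty => simp
  | cons i s hi ih =>
    rw [Finset.sum_cons, Finset.sum_cons]
    exact (map_add_le_add σ _ _).trans (by linarith)

theorem mem_closure_st (σ : Seminorm ℝ A) {S : Set A} {z : A}
    (h : ∀ ε > 0, ∃ w ∈ S, σ (z - w) < ε) :
    z ∈ @closure A (seminormTopology σ) S := by
  letI := seminormTopology σ
  have hp := withSeminorms_st σ
  rw [mem_closure_iff_nhds]
  intro U hU
  rcases (hp.mem_nhds_iff z U).mp hU with ⟨s, r, hr, hball⟩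
  rcases h r hr with ⟨w, hwS, hw⟩
  refine ⟨w, hball ?_, hwS⟩
  rw [Seminorm.mem_ball]
  calc (s.sup (fun _ : Unit => σ)) (w - z) ≤ σ (w - z) := sup_le_sem σ s _
  _ = σ (z - w) := by rw [← map_neg_eq_map σ]; ring_nf
  _ < r := hw

theorem continuous_of_bound (σ : Seminorm ℝ A) (f : A →ₗ[ℝ] ℝ) (C : ℝ)
    (h : ∀ x, |f x| ≤ C * σ x) :
    @Continuous A ℝ (seminormTopology σ) _ f := by
  letI := seminormTopology σ
  have hp := withSeminorms_st σ
  refine Seminorm.continuous_from_bounded hp (norm_withSeminorms ℝ ℝ) f ?_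
  intro _
  refine ⟨{Unit.unit}, (⟨max C 0, le_max_right _ _⟩ : NNReal), ?_⟩
  rw [Finset.sup_singleton]
  rw [Seminorm.le_def]
  intro x
  have hx : (normSeminorm ℝ ℝ).comp (↑f) x = |f x| := rfl
  rw [hx]
  show |f x| ≤ (⟨max C 0, le_max_right _ _⟩ : NNReal) • σ x
  calc |f x| ≤ C * σ x := h x
  _ ≤ max C 0 * σ x := mul_le_mul_of_nonneg_right (le_max_left _ _) (apply_nonneg σ x)
  _ = _ := by simp [NNReal.smul_def]

theorem bound_of_continuous (σ : Seminorm ℝ A) (f : A →ₗ[ℝ] ℝ)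
    (hf : @Continuous A ℝ (seminormTopology σ) _ f) :
    ∃ C : ℝ, ∀ x, |f x| ≤ C * σ x := by
  letI := seminormTopology σ
  have hp := withSeminorms_st σ
  have h0 : f ⁻¹' (Set.Ioo (-1 : ℝ) 1) ∈ @nhds A (seminormTopology σ) 0 := by
    have : ContinuousAt f 0 := hf.continuousAt
    apply this
    rw [map_zero]
    exact Ioo_mem_nhds (by norm_num) (by norm_num)
  rcases (hp.mem_nhds_iff 0 _).mp h0 with ⟨s, r, hr, hball⟩
  have key : ∀ x : A, σ x < r → |f x| < 1 := by
    intro x hx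
    have hmem : x ∈ (s.sup (fun _ : Unit => σ)).ball 0 r := by
      rw [Seminorm.mem_ball]
      exact lt_of_le_of_lt (by simpa using sup_le_sem σ s (x - 0)) (by simpa using hx)
    have := hball hmem
    rw [Set.mem_preimage, Set.mem_Ioo] at this
    exact abs_lt.mpr this
  refine ⟨r⁻¹, fun x => ?_⟩
  refine le_of_forall_pos_le_add (fun η hη => ?_)
  have ht : (0:ℝ) < r⁻¹ * σ x + η := by positivity
  have hs : σ ((r⁻¹ * σ x + η)⁻¹ • x) < r := by
    rw [map_smul_eq_mul, Real.norm_eq_abs, abs_of_pos (by positivity)]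
    rw [inv_mul_lt_iff₀ ht]
    nlinarith [mul_inv_cancel₀ (ne_of_gt hr), apply_nonneg σ x]
  have h1 := key _ hs
  rw [map_smul, smul_eq_mul, abs_mul, abs_of_pos (by positivity)] at h1
  calc |f x| = (r⁻¹ * σ x + η) * ((r⁻¹ * σ x + η)⁻¹ * |f x|) := by
        rw [← mul_assoc, mul_inv_cancel₀ (ne_of_gt ht), one_mul]
  _ ≤ (r⁻¹ * σ x + η) * 1 := mul_le_mul_of_nonneg_left (le_of_lt h1) (le_of_lt ht)
  _ = r⁻¹ * σ x + η := by ring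

end Aux

section Cone

variable {A : Type*} [CommRing A] [Algebra ℝ A] {d : ℕ} {M : Set A}

theorem pm_zero_mem (hM : IsPowerModule d M) (hd : 0 < d) : (0 : A) ∈ M := by
  have := hM.2.2 0 1 hM.1
  simpa [zero_pow (by omega : 2 * d ≠ 0)] using this

theorem pm_smul_mem (hM : IsPowerModule d M) (hd : 0 < d)
    {t : ℝ} (ht : 0 ≤ t) {m : A} (hm : m ∈ M) : t • m ∈ M := by
  have h2d : (2 * d : ℕ) ≠ 0 := by omega
  have hu : (t ^ ((2 * d : ℕ) : ℝ)⁻¹) ^ (2 * d : ℕ) = t :=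
    Real.rpow_inv_natCast_pow ht h2d
  set u : ℝ := t ^ ((2 * d : ℕ) : ℝ)⁻¹
  have : t • m = (algebraMap ℝ A u) ^ (2 * d) * m := by
    rw [← map_pow, hu, Algebra.smul_def]
  rw [this]
  exact hM.2.2 _ m hm

theorem pm_convex (hM : IsPowerModule d M) (hd : 0 < d) : Convex ℝ M :=
  fun x hx y hy a b ha hb _ =>
    hM.2.1 _ (pm_smul_mem hM hd ha hx) _ (pm_smul_mem hM hd hb hy)

end Cone

section Pow

theorem one_add_pow_le {r : ℝ} (h0 : 0 ≤ r) (h1 : r ≤ 1) (n : ℕ) :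
    (1 + r) ^ n ≤ 1 + (2 ^ n - 1) * r := by
  induction n with
  | zero => norm_num
  | succ n ih =>
    have h2 : (0:ℝ) < 2 ^ n := by positivity
    rw [pow_succ, pow_succ]
    nlinarith [mul_le_mul_of_nonneg_right ih (by linarith : (0:ℝ) ≤ 1 + r),
      mul_nonneg (by nlinarith [one_le_pow₀ (by norm_num : (1:ℝ) ≤ 2) (n := n)] : (0:ℝ) ≤ 2 ^ n - 1) (by nlinarith : (0:ℝ) ≤ r - r ^ 2), one_le_pow₀ (by norm_num : (1:ℝ) ≤ 2) (n := n)]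

end Pow

section Ball

variable {A : Type*} [CommRing A] [Algebra ℝ A]

theorem sigma_one_sub_pow (σ : Seminorm ℝ A) (hσ : ∀ a b : A, σ (a * b) ≤ σ a * σ b)
    {c : ℝ} (hc1 : 1 ≤ c) (hcσ : σ 1 ≤ c) (y : A) (i : ℕ) :
    σ (1 - (1 - y) ^ i) ≤ c * ((1 + σ y) ^ i - 1) := by
  induction i with
  | zero => simp
  | succ i ih =>
    have hid : 1 - (1 - y) ^ (i + 1) = (1 - (1 - y) ^ i) + (1 - y) ^ i * y := by ring
    have h1 : σ ((1 - y) ^ i) ≤ c * ((1 + σ y) ^ i - 1) + c := by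
      have : σ ((1 - y) ^ i) ≤ σ ((1 - y) ^ i - 1) + σ 1 := by
        have := map_add_le_add σ ((1 - y) ^ i - 1) 1
        simpa using this
      have hneg : σ ((1 - y) ^ i - 1) = σ (1 - (1 - y) ^ i) := by
        rw [← map_neg_eq_map σ]; ring_nf
      linarith [hneg ▸ this]
    have h2 : σ (1 - (1 - y) ^ (i + 1)) ≤ σ (1 - (1 - y) ^ i) + σ ((1 - y) ^ i) * σ y := by
      rw [hid]
      exact (map_add_le_add σ _ _).trans (by linarith [hσ ((1 - y) ^ i) y])
    have hP : (1:ℝ) ≤ (1 + σ y) ^ i := one_le_pow₀ (by linarith [apply_nonneg σ y])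
    have hs : (0:ℝ) ≤ σ y := apply_nonneg σ y
    simp only [pow_succ] at h2 ⊢
    nlinarith [mul_le_mul_of_nonneg_right h1 hs]

theorem sigma_one_sub_pow_mul (σ : Seminorm ℝ A) (hσ : ∀ a b : A, σ (a * b) ≤ σ a * σ b)
    {c : ℝ} (hc1 : 1 ≤ c) (hcσ : σ 1 ≤ c) (y y' : A) (i j : ℕ) :
    σ (1 - (1 - y) ^ i * (1 - y') ^ j) ≤
      c ^ 2 * ((1 + σ y) ^ i * (1 + σ y') ^ j - 1) := by
  have hid : 1 - (1 - y) ^ i * (1 - y') ^ j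
      = (1 - (1 - y) ^ i) + (1 - y) ^ i * (1 - (1 - y') ^ j) := by ring
  have hA := sigma_one_sub_pow σ hσ hc1 hcσ y i
  have hB := sigma_one_sub_pow σ hσ hc1 hcσ y' j
  have hui : σ ((1 - y) ^ i) ≤ c * ((1 + σ y) ^ i - 1) + c := by
    have h := map_add_le_add σ ((1 - y) ^ i - 1) 1
    have hneg : σ ((1 - y) ^ i - 1) = σ (1 - (1 - y) ^ i) := by
      rw [← map_neg_eq_map σ]; ring_nf
    simp only [sub_add_cancel] at h
    linarith [hneg ▸ h]
  have hP : (1:ℝ) ≤ (1 + σ y) ^ i := one_le_pow₀ (by linarith [apply_nonneg σ y])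
  have hQ : (1:ℝ) ≤ (1 + σ y') ^ j := one_le_pow₀ (by linarith [apply_nonneg σ y'])
  have hstep : σ (1 - (1 - y) ^ i * (1 - y') ^ j)
      ≤ σ (1 - (1 - y) ^ i) + σ ((1 - y) ^ i) * σ (1 - (1 - y') ^ j) := by
    rw [hid]
    exact (map_add_le_add σ _ _).trans (by linarith [hσ ((1 - y) ^ i) (1 - (1 - y') ^ j)])
  nlinarith [apply_nonneg σ ((1 - y) ^ i), apply_nonneg σ (1 - (1 - y') ^ j),
    apply_nonneg σ (1 - (1 - y) ^ i)]

end Ball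

section BallMain

variable {A : Type*} [CommRing A] [Algebra ℝ A]

noncomputable def pmG (d : ℕ) (y : A) : A :=
  (1 - y) ^ (2 * d) - 1 + ((2 * d : ℕ) : ℝ) • y

noncomputable def pmSeq (d : ℕ) (x : A) : ℕ → A
  | 0 => 0
  | k + 1 => (((2 * d : ℕ) : ℝ))⁻¹ • (x + pmG d (pmSeq d x k))

theorem pmG_sub (d : ℕ) (y y' : A) :
    pmG d y - pmG d y' =
      (y - y') * ∑ i ∈ Finset.range (2 * d),
        (1 - (1 - y) ^ i * (1 - y') ^ (2 * d - 1 - i)) := by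
  have hgeom := geom_sum₂_mul (1 - y) (1 - y') (2 * d)
  unfold pmG
  rw [Finset.sum_sub_distrib, Finset.sum_const, Finset.card_range]
  simp only [Nat.cast_smul_eq_nsmul, nsmul_eq_mul, mul_one]
  linear_combination -hgeom

theorem pmG_sub_bound (σ : Seminorm ℝ A) (hσ : ∀ a b : A, σ (a * b) ≤ σ a * σ b)
    {d : ℕ} (hd : 0 < d) {c r : ℝ} (hc1 : 1 ≤ c) (hcσ : σ 1 ≤ c) (hr0 : 0 ≤ r)
    (hκ : c ^ 2 * ((1 + r) ^ (2 * d - 1) - 1) ≤ 1 / 2)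
    {y y' : A} (hy : σ y ≤ r) (hy' : σ y' ≤ r) :
    σ (pmG d y - pmG d y') ≤ (d : ℝ) * σ (y - y') := by
  rw [pmG_sub]
  have hterm : ∀ i ∈ Finset.range (2 * d),
      σ (1 - (1 - y) ^ i * (1 - y') ^ (2 * d - 1 - i)) ≤ 1 / 2 := by
    intro i hi
    rw [Finset.mem_range] at hi
    have h1 := sigma_one_sub_pow_mul σ hσ hc1 hcσ y y' i (2 * d - 1 - i)
    have h2 : (1 + σ y) ^ i ≤ (1 + r) ^ i :=
      pow_le_pow_left₀ (by linarith [apply_nonneg σ y]) (by linarith) i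
    have h3 : (1 + σ y') ^ (2 * d - 1 - i) ≤ (1 + r) ^ (2 * d - 1 - i) :=
      pow_le_pow_left₀ (by linarith [apply_nonneg σ y']) (by linarith) _
    have h4 : (1 + r) ^ i * (1 + r) ^ (2 * d - 1 - i) = (1 + r) ^ (2 * d - 1) := by
      rw [← pow_add]
      congr 1
      omega
    have hc0 : (0:ℝ) < c ^ 2 := by positivity
    have hP1 : (0:ℝ) ≤ (1 + σ y) ^ i := by positivity
    have hP2 : (0:ℝ) ≤ (1 + σ y') ^ (2 * d - 1 - i) := by positivity
    have hQ1 : (0:ℝ) ≤ (1 + r) ^ i := by positivity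
    have hmul : (1 + σ y) ^ i * (1 + σ y') ^ (2 * d - 1 - i)
        ≤ (1 + r) ^ i * (1 + r) ^ (2 * d - 1 - i) :=
      mul_le_mul h2 h3 hP2 hQ1
    rw [h4] at hmul
    nlinarith
  have hsum : σ (∑ i ∈ Finset.range (2 * d),
      (1 - (1 - y) ^ i * (1 - y') ^ (2 * d - 1 - i))) ≤ (2 * d : ℕ) * (1 / 2) := by
    refine (seminorm_sum_le σ _ _).trans ?_
    calc ∑ i ∈ Finset.range (2 * d), σ (1 - (1 - y) ^ i * (1 - y') ^ (2 * d - 1 - i))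
        ≤ ∑ _i ∈ Finset.range (2 * d), (1 / 2 : ℝ) := Finset.sum_le_sum hterm
    _ = (2 * d : ℕ) * (1 / 2) := by
        rw [Finset.sum_const, Finset.card_range, nsmul_eq_mul]
  calc σ _ ≤ σ (y - y') * σ (∑ i ∈ Finset.range (2 * d),
        (1 - (1 - y) ^ i * (1 - y') ^ (2 * d - 1 - i))) := hσ _ _
  _ ≤ σ (y - y') * ((2 * d : ℕ) * (1 / 2)) :=
      mul_le_mul_of_nonneg_left hsum (apply_nonneg σ _)
  _ = (d : ℝ) * σ (y - y') := by push_cast; ring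

end BallMain

section BallFinal

variable {A : Type*} [CommRing A] [Algebra ℝ A]

theorem ball_lemma (σ : Seminorm ℝ A) (hσ : ∀ a b : A, σ (a * b) ≤ σ a * σ b)
    {d : ℕ} (hd : 0 < d) {M : Set A} (hM : IsPowerModule d M) :
    ∃ ε > 0, ∀ x : A, σ x ≤ ε → ∀ m ∈ M,
      (1 - x) * m ∈ @closure A (seminormTopology σ) M := by
  classical
  set c : ℝ := max (σ 1) 1 with hc
  have hc1 : (1:ℝ) ≤ c := le_max_right _ _
  have hcσ : σ 1 ≤ c := le_max_left _ _
  have hc0 : (0:ℝ) < c := by linarith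
  set n : ℕ := 2 * d - 1 with hn
  set r : ℝ := min 1 ((2 * c ^ 2 * 2 ^ n)⁻¹) with hrdef
  have hr0 : (0:ℝ) < r := by
    apply lt_min one_pos
    positivity
  have hr1 : r ≤ 1 := min_le_left _ _
  have hκ : c ^ 2 * ((1 + r) ^ n - 1) ≤ 1 / 2 := by
    have h1 : (1 + r) ^ n ≤ 1 + (2 ^ n - 1) * r := one_add_pow_le hr0.le hr1 n
    have h2 : r ≤ (2 * c ^ 2 * 2 ^ n)⁻¹ := min_le_right _ _
    have h3 : (0:ℝ) < 2 * c ^ 2 * 2 ^ n := by positivity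
    have h4 : r * (2 * c ^ 2 * 2 ^ n) ≤ 1 := by
      rw [← le_div_iff₀ h3, one_div]
      exact min_le_right _ _
    have h5 : (0:ℝ) < (2:ℝ) ^ n := by positivity
    nlinarith [sq_nonneg c, mul_nonneg (mul_nonneg hr0.le (sq_nonneg c)) h5.le]
  refine ⟨d * r, by positivity, fun x hx m hm => ?_⟩
  have h2dR : ((2 * d : ℕ) : ℝ) ≠ 0 := by positivity
  have h2dpos : (0:ℝ) < ((2 * d : ℕ) : ℝ) := by positivity
  -- the iteration stays in the ball of radius r
  have hbnd : ∀ y y' : A, σ y ≤ r → σ y' ≤ r →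
      σ (pmG d y - pmG d y') ≤ (d : ℝ) * σ (y - y') :=
    fun y y' hy hy' => pmG_sub_bound σ hσ hd hc1 hcσ hr0.le hκ hy hy'
  have hG0 : pmG d (0 : A) = 0 := by simp [pmG]
  have hyr : ∀ k, σ (pmSeq d x k) ≤ r := by
    intro k
    induction k with
    | zero => simp [pmSeq, hr0.le]
    | succ k ih =>
      have hGk : σ (pmG d (pmSeq d x k)) ≤ (d : ℝ) * r := by
        have := hbnd (pmSeq d x k) 0 ih (by simp [hr0.le])
        rw [hG0, sub_zero, sub_zero] at this
        refine this.trans ?_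
        exact mul_le_mul_of_nonneg_left ih (by positivity)
      show σ ((((2 * d : ℕ) : ℝ))⁻¹ • (x + pmG d (pmSeq d x k))) ≤ r
      rw [map_smul_eq_mul, Real.norm_eq_abs, abs_of_pos (by positivity)]
      have : σ (x + pmG d (pmSeq d x k)) ≤ (d : ℝ) * r + (d : ℝ) * r :=
        (map_add_le_add σ _ _).trans (by push_cast at hx ⊢; linarith)
      calc (((2 * d : ℕ) : ℝ))⁻¹ * σ (x + pmG d (pmSeq d x k))
          ≤ (((2 * d : ℕ) : ℝ))⁻¹ * ((d : ℝ) * r + (d : ℝ) * r) := by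
            exact mul_le_mul_of_nonneg_left this (by positivity)
      _ = r := by field_simp; push_cast; ring
  have hdiff : ∀ k, σ (pmSeq d x (k+1) - pmSeq d x k) ≤ (1/2) ^ k * r := by
    intro k
    induction k with
    | zero =>
      simpa [pmSeq] using hyr 1
    | succ k ih =>
      have hstep : pmSeq d x (k+2) - pmSeq d x (k+1)
          = (((2 * d : ℕ) : ℝ))⁻¹ • (pmG d (pmSeq d x (k+1)) - pmG d (pmSeq d x k)) := by
        show (((2 * d : ℕ) : ℝ))⁻¹ • (x + pmG d (pmSeq d x (k+1)))
            - (((2 * d : ℕ) : ℝ))⁻¹ • (x + pmG d (pmSeq d x k)) = _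
        rw [← smul_sub]
        congr 1
        abel
      rw [hstep, map_smul_eq_mul, Real.norm_eq_abs, abs_of_pos (by positivity)]
      have h1 := hbnd _ _ (hyr (k+1)) (hyr k)
      calc (((2 * d : ℕ) : ℝ))⁻¹ * σ (pmG d (pmSeq d x (k+1)) - pmG d (pmSeq d x k))
          ≤ (((2 * d : ℕ) : ℝ))⁻¹ * ((d : ℝ) * σ (pmSeq d x (k+1) - pmSeq d x k)) :=
            mul_le_mul_of_nonneg_left h1 (by positivity)
      _ = (1/2) * σ (pmSeq d x (k+1) - pmSeq d x k) := by
            field_simp; push_cast; ring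
      _ ≤ (1/2) * ((1/2) ^ k * r) := by
            exact mul_le_mul_of_nonneg_left ih (by norm_num)
      _ = (1/2) ^ (k+1) * r := by ring
  have hrel : ∀ k, (1 - pmSeq d x k) ^ (2*d) - (1 - x)
      = ((2 * d : ℕ) : ℝ) • (pmSeq d x (k+1) - pmSeq d x k) := by
    intro k
    have e1 : ((2 * d : ℕ) : ℝ) • pmSeq d x (k+1) = x + pmG d (pmSeq d x k) := by
      show ((2 * d : ℕ) : ℝ) • ((((2 * d : ℕ) : ℝ))⁻¹ • (x + pmG d (pmSeq d x k))) = _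
      rw [smul_inv_smul₀ h2dR]
    rw [smul_sub, e1]
    unfold pmG
    abel
  -- conclude
  apply mem_closure_st σ
  intro ε' hε'
  have hden : (0:ℝ) < ((2 * d : ℕ) : ℝ) * r * σ m + 1 := by
    have := apply_nonneg σ m
    positivity
  obtain ⟨k, hk⟩ := exists_pow_lt_of_lt_one (div_pos hε' hden) (by norm_num : (1:ℝ)/2 < 1)
  refine ⟨(1 - pmSeq d x k) ^ (2*d) * m, hM.2.2 _ _ hm, ?_⟩
  have heq : (1 - x) * m - (1 - pmSeq d x k) ^ (2*d) * m
      = -(((1 - pmSeq d x k) ^ (2*d) - (1 - x)) * m) := by ring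
  rw [heq, map_neg_eq_map σ, hrel k, smul_mul_assoc, map_smul_eq_mul,
    Real.norm_eq_abs, abs_of_pos h2dpos]
  have h1 : σ ((pmSeq d x (k+1) - pmSeq d x k) * m)
      ≤ ((1/2) ^ k * r) * σ m := by
    refine (hσ _ _).trans ?_
    exact mul_le_mul_of_nonneg_right (hdiff k) (apply_nonneg σ m)
  have h2 : ((2 * d : ℕ) : ℝ) * σ ((pmSeq d x (k+1) - pmSeq d x k) * m)
      ≤ ((2 * d : ℕ) : ℝ) * (((1/2) ^ k * r) * σ m) :=
    mul_le_mul_of_nonneg_left h1 h2dpos.le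
  refine h2.trans_lt ?_
  have hk' : (1/2 : ℝ) ^ k * (((2 * d : ℕ) : ℝ) * r * σ m + 1) < ε' := by
    rw [div_eq_inv_mul] at hk
    calc (1/2 : ℝ) ^ k * (((2 * d : ℕ) : ℝ) * r * σ m + 1)
        < (ε' / (((2 * d : ℕ) : ℝ) * r * σ m + 1)) * (((2 * d : ℕ) : ℝ) * r * σ m + 1) := by
          exact mul_lt_mul_of_pos_right (by rw [div_eq_inv_mul]; exact hk) hden
    _ = ε' := div_mul_cancel₀ _ (ne_of_gt hden)
  have hpow : (0:ℝ) < (1/2:ℝ) ^ k := by positivity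
  nlinarith [apply_nonneg σ m, mul_nonneg (mul_nonneg h2dpos.le hr0.le) (apply_nonneg σ m)]

end BallFinal

section Norm

variable {A : Type*} [CommRing A] [Algebra ℝ A]

theorem pos_on_closure (σ : Seminorm ℝ A) (f : A →ₗ[ℝ] ℝ) {C : ℝ}
    (hb : ∀ x, |f x| ≤ C * σ x) {S : Set A} (hpos : ∀ m ∈ S, 0 ≤ f m) :
    ∀ z ∈ @closure A (seminormTopology σ) S, 0 ≤ f z := by
  letI := seminormTopology σ
  have hcont : Continuous f := continuous_of_bound σ f C hb
  have hsub : @closure A (seminormTopology σ) S ⊆ f ⁻¹' (Set.Ici 0) :=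
    closure_minimal (fun m hm => hpos m hm) (IsClosed.preimage hcont isClosed_Ici)
  exact fun z hz => hsub hz

theorem norm_bound (σ : Seminorm ℝ A) {M : Set A} {ε : ℝ} (hε : 0 < ε)
    (hball : ∀ x : A, σ x ≤ ε → (1 - x) ∈ @closure A (seminormTopology σ) M)
    (f : A →ₗ[ℝ] ℝ) (hpos : ∀ m ∈ M, 0 ≤ f m) (hbdd : ∃ C : ℝ, ∀ x, |f x| ≤ C * σ x) :
    ∀ x, |f x| ≤ ε⁻¹ * f 1 * σ x := by
  obtain ⟨C, hC⟩ := hbdd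
  have hcl := pos_on_closure σ f hC hpos
  have hf1 : 0 ≤ f 1 := by
    have := hcl _ (hball 0 (by simp [hε.le]))
    simpa using this
  have key : ∀ x : A, σ x ≤ ε → |f x| ≤ f 1 := by
    intro x hx
    have h1 : 0 ≤ f (1 - x) := hcl _ (hball x hx)
    have h2 : 0 ≤ f (1 + x) := by
      have h := hball (-x) (by rwa [map_neg_eq_map])
      rw [sub_neg_eq_add] at h
      exact hcl _ h
    rw [map_sub] at h1
    rw [map_add] at h2
    exact abs_le.mpr ⟨by linarith, by linarith⟩
  intro x
  refine le_of_forall_pos_le_add (fun η hη => ?_)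
  set δ : ℝ := η * ε / (f 1 + 1) with hδdef
  have hδ : 0 < δ := by positivity
  have hσxδ : 0 < σ x + δ := by
    have := apply_nonneg σ x; linarith
  have hσu : σ ((ε / (σ x + δ)) • x) ≤ ε := by
    rw [map_smul_eq_mul, Real.norm_eq_abs, abs_of_pos (by positivity)]
    rw [div_mul_eq_mul_div, div_le_iff₀ hσxδ]
    nlinarith [apply_nonneg σ x]
  have h3 := key _ hσu
  rw [map_smul, smul_eq_mul, abs_mul, abs_of_pos (by positivity)] at h3
  have h4 : |f x| ≤ f 1 * (σ x + δ) / ε := by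
    have hmul := mul_le_mul_of_nonneg_left h3
      (le_of_lt (show (0:ℝ) < (σ x + δ) / ε by positivity))
    calc |f x| = (σ x + δ) / ε * (ε / (σ x + δ) * |f x|) := by
          field_simp
    _ ≤ (σ x + δ) / ε * f 1 := hmul
    _ = f 1 * (σ x + δ) / ε := by ring
  have h5 : f 1 * δ / ε ≤ η := by
    rw [hδdef]
    rw [div_le_iff₀ hε]
    have : f 1 * (η * ε / (f 1 + 1)) = (f 1 / (f 1 + 1)) * (η * ε) := by ring
    rw [this]
    have hfrac : f 1 / (f 1 + 1) ≤ 1 := by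
      rw [div_le_one (by linarith)]; linarith
    nlinarith [mul_pos hη hε]
  calc |f x| ≤ f 1 * (σ x + δ) / ε := h4
  _ = ε⁻¹ * f 1 * σ x + f 1 * δ / ε := by ring
  _ ≤ ε⁻¹ * f 1 * σ x + η := by linarith

end Norm

section KSet

variable {A : Type*} [CommRing A] [Algebra ℝ A]

def KSet (σ : Seminorm ℝ A) (M : Set A) (C : ℝ) : Set (A → ℝ) :=
  {f | (∀ x y, f (x + y) = f x + f y) ∧ (∀ (t : ℝ) (x : A), f (t • x) = t * f x) ∧
       f 1 = 1 ∧ (∀ m ∈ M, 0 ≤ f m) ∧ (∀ x, |f x| ≤ C * σ x)}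

/-- Package the linearity data of a member of `KSet` as a `LinearMap`. -/
def toLin (f : A → ℝ) (h1 : ∀ x y, f (x + y) = f x + f y)
    (h2 : ∀ (t : ℝ) (x : A), f (t • x) = t * f x) : A →ₗ[ℝ] ℝ where
  toFun := f
  map_add' := h1
  map_smul' := fun t x => by simpa [smul_eq_mul] using h2 t x

theorem K_closed (σ : Seminorm ℝ A) (M : Set A) (C : ℝ) : IsClosed (KSet σ M C) := by
  have hrw : KSet σ M C =
      (⋂ (x : A), ⋂ (y : A), {f : A → ℝ | f (x + y) = f x + f y}) ∩
      ((⋂ (t : ℝ), ⋂ (x : A), {f : A → ℝ | f (t • x) = t * f x}) ∩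
      ({f : A → ℝ | f 1 = 1} ∩
      ((⋂ (m : A), ⋂ (_ : m ∈ M), {f : A → ℝ | 0 ≤ f m}) ∩
      (⋂ (x : A), {f : A → ℝ | |f x| ≤ C * σ x})))) := by
    ext f
    simp only [KSet, Set.mem_setOf_eq, Set.mem_inter_iff, Set.mem_iInter] <;> tauto
  rw [hrw]
  refine IsClosed.inter ?_ (IsClosed.inter ?_ (IsClosed.inter ?_ (IsClosed.inter ?_ ?_)))
  · exact isClosed_iInter fun x => isClosed_iInter fun y =>
      isClosed_eq (continuous_apply (x + y)) ((continuous_apply x).add (continuous_apply y))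
  · exact isClosed_iInter fun t => isClosed_iInter fun x =>
      isClosed_eq (continuous_apply (t • x)) (continuous_const.mul (continuous_apply x))
  · exact isClosed_eq (continuous_apply 1) continuous_const
  · exact isClosed_iInter fun m => isClosed_iInter fun _ =>
      isClosed_le continuous_const (continuous_apply m)
  · exact isClosed_iInter fun x =>
      isClosed_le (continuous_apply x).abs continuous_const

theorem K_compact (σ : Seminorm ℝ A) (M : Set A) (C : ℝ) : IsCompact (KSet σ M C) := by
  refine IsCompact.of_isClosed_subset
    (isCompact_univ_pi (fun x : A => isCompact_Icc (a := -(C * σ x)) (b := C * σ x)))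
    (K_closed σ M C) ?_
  intro f hf
  rw [Set.mem_univ_pi]
  intro x
  exact abs_le.mp (hf.2.2.2.2 x)

theorem K_convex (σ : Seminorm ℝ A) (M : Set A) (C : ℝ) : Convex ℝ (KSet σ M C) := by
  intro f hf g hg u v hu hv huv
  obtain ⟨hf1, hf2, hf3, hf4, hf5⟩ := hf
  obtain ⟨hg1, hg2, hg3, hg4, hg5⟩ := hg
  have happ : ∀ z : A, (u • f + v • g) z = u * f z + v * g z := by
    intro z; simp [Pi.add_apply, Pi.smul_apply, smul_eq_mul]
  refine ⟨?_, ?_, ?_, ?_, ?_⟩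
  · intro x y; rw [happ, happ, happ, hf1, hg1]; ring
  · intro t x; rw [happ, happ, hf2, hg2]; ring
  · rw [happ, hf3, hg3]; linarith
  · intro m hm
    rw [happ]
    exact add_nonneg (mul_nonneg hu (hf4 m hm)) (mul_nonneg hv (hg4 m hm))
  · intro x
    rw [happ]
    calc |u * f x + v * g x| ≤ |u * f x| + |v * g x| := abs_add_le _ _
    _ = u * |f x| + v * |g x| := by rw [abs_mul, abs_mul, abs_of_nonneg hu, abs_of_nonneg hv]
    _ ≤ u * (C * σ x) + v * (C * σ x) := by
        exact add_le_add (mul_le_mul_of_nonneg_left (hf5 x) hu)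
          (mul_le_mul_of_nonneg_left (hg5 x) hv)
    _ = C * σ x := by rw [← add_mul, huv, one_mul]

theorem exists_extreme_min (σ : Seminorm ℝ A) (M : Set A) (C : ℝ)
    (hne : (KSet σ M C).Nonempty) (a : A) :
    ∃ e ∈ KSet σ M C, (∀ f ∈ KSet σ M C, e a ≤ f a) ∧
      e ∈ Set.extremePoints ℝ (KSet σ M C) := by
  obtain ⟨e₀, he₀, hmin⟩ :=
    (K_compact σ M C).exists_isMinOn hne (continuous_apply a).continuousOn
  set F : Set (A → ℝ) := KSet σ M C ∩ {f | f a = e₀ a} with hF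
  have hFcomp : IsCompact F :=
    (K_compact σ M C).inter_right (isClosed_eq (continuous_apply a) continuous_const)
  have hFne : F.Nonempty := ⟨e₀, he₀, rfl⟩
  obtain ⟨e, he⟩ := hFcomp.extremePoints_nonempty hFne
  rw [mem_extremePoints] at he
  obtain ⟨⟨heK, hea⟩, hex⟩ := he
  have hea' : e a = e₀ a := hea
  refine ⟨e, heK, ?_, ?_⟩
  · intro f hf
    rw [hea']
    exact hmin hf
  · rw [mem_extremePoints]
    refine ⟨heK, fun x1 h1 x2 h2 hseg => ?_⟩
    obtain ⟨θ1, θ2, hθ1, hθ2, hθsum, heq⟩ := hseg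
    have h1a : e₀ a ≤ x1 a := hmin h1
    have h2a : e₀ a ≤ x2 a := hmin h2
    have heval : θ1 * x1 a + θ2 * x2 a = e₀ a := by
      have := congr_fun heq a
      simpa [Pi.add_apply, Pi.smul_apply, smul_eq_mul, hea'] using this
    have hone : (θ1 + θ2) * e₀ a = e₀ a := by rw [hθsum, one_mul]
    have hx1a : x1 a = e₀ a := by
      by_contra hne'
      have hlt : e₀ a < x1 a := lt_of_le_of_ne h1a (Ne.symm hne')
      nlinarith [mul_lt_mul_of_pos_left hlt hθ1, mul_le_mul_of_nonneg_left h2a hθ2.le]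
    have hx2a : x2 a = e₀ a := by
      by_contra hne'
      have hlt : e₀ a < x2 a := lt_of_le_of_ne h2a (Ne.symm hne')
      nlinarith [mul_lt_mul_of_pos_left hlt hθ2, mul_le_mul_of_nonneg_left h1a hθ1.le]
    exact hex x1 ⟨h1, hx1a⟩ x2 ⟨h2, hx2a⟩ ⟨θ1, θ2, hθ1, hθ2, hθsum, heq⟩

end KSet

section ExtremeMul

variable {A : Type*} [CommRing A] [Algebra ℝ A]

theorem extreme_key (σ : Seminorm ℝ A) (hσ : ∀ a b : A, σ (a * b) ≤ σ a * σ b)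
    {d : ℕ} (hd : 0 < d) {M : Set A} (hM : IsPowerModule d M)
    {ε : ℝ} (hε : 0 < ε)
    (hball : ∀ x : A, σ x ≤ ε → ∀ m ∈ M, (1 - x) * m ∈ @closure A (seminormTopology σ) M)
    {e : A → ℝ} (he : e ∈ Set.extremePoints ℝ (KSet σ M ε⁻¹)) :
    ∀ cc x : A, e (cc ^ (2 * d) * x) = e (cc ^ (2 * d)) * e x := by
  rw [mem_extremePoints] at he
  obtain ⟨heK, hex⟩ := he
  obtain ⟨h1, h2, h3, h4, h5⟩ := heK
  set E : A →ₗ[ℝ] ℝ := toLin e h1 h2 with hE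
  have hEe : ∀ z, E z = e z := fun z => rfl
  have hball' : ∀ x : A, σ x ≤ ε → (1 - x) ∈ @closure A (seminormTopology σ) M := by
    intro x hx
    have := hball x hx 1 hM.1
    rwa [mul_one] at this
  have hcl : ∀ z ∈ @closure A (seminormTopology σ) M, 0 ≤ e z := by
    intro z hz
    exact pos_on_closure σ E h5 h4 z hz
  intro cc x
  set p2 : A := cc ^ (2 * d) with hp2
  have hp2M : ∀ m ∈ M, p2 * m ∈ M := fun m hm => hM.2.2 cc m hm
  have hs : ∃ s : ℝ, 0 < s ∧ σ (s • p2) ≤ ε := by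
    by_cases hz : σ p2 = 0
    · refine ⟨1, one_pos, ?_⟩
      rw [map_smul_eq_mul, hz, mul_zero]
      exact hε.le
    · have hσp2 : 0 < σ p2 := lt_of_le_of_ne (apply_nonneg σ p2) (Ne.symm hz)
      refine ⟨ε / σ p2, by positivity, ?_⟩
      rw [map_smul_eq_mul, Real.norm_eq_abs, abs_of_pos (by positivity),
        div_mul_cancel₀ _ hz]
  obtain ⟨s, hs0, hsε⟩ := hs
  set q : A := s • p2 with hq
  have hqM : ∀ m ∈ M, q * m ∈ M := by
    intro m hm
    rw [hq, smul_mul_assoc]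
    exact pm_smul_mem hM hd hs0.le (hp2M m hm)
  have hqmem : q ∈ M := by
    have := hqM 1 hM.1
    rwa [mul_one] at this
  have h1qM : ∀ m ∈ M, (1 - q) * m ∈ @closure A (seminormTopology σ) M :=
    fun m hm => hball q hsε m hm
  set t : ℝ := e q with htdef
  have ht0 : 0 ≤ t := h4 q hqmem
  have ht1 : t ≤ 1 := by
    have h := hcl _ (h1qM 1 hM.1)
    rw [mul_one] at h
    have : e (1 - q) = e 1 - e q := by rw [← hEe, ← hEe, ← hEe, map_sub]
    rw [this, h3] at h
    linarith
  -- the two pieces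
  set f1 : A → ℝ := fun z => e (q * z) with hf1
  have f1add : ∀ z w, f1 (z + w) = f1 z + f1 w := by
    intro z w; rw [hf1]; simp only [mul_add]; exact h1 _ _
  have f1smul : ∀ (r : ℝ) (z : A), f1 (r • z) = r * f1 z := by
    intro r z; rw [hf1]; simp only [mul_smul_comm]; exact h2 _ _
  have f1pos : ∀ m ∈ M, 0 ≤ f1 m := fun m hm => h4 _ (hqM m hm)
  have f1bdd : ∀ z, |f1 z| ≤ (ε⁻¹ * σ q) * σ z := by
    intro z
    calc |f1 z| ≤ ε⁻¹ * σ (q * z) := h5 _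
    _ ≤ ε⁻¹ * (σ q * σ z) := by
        exact mul_le_mul_of_nonneg_left (hσ q z) (by positivity)
    _ = (ε⁻¹ * σ q) * σ z := by ring
  have hf11 : f1 1 = t := by
    show e (q * 1) = t
    rw [mul_one]
  have hF1 : ∀ z, |f1 z| ≤ ε⁻¹ * t * σ z := by
    have := norm_bound σ hε hball' (toLin f1 f1add f1smul) f1pos ⟨ε⁻¹ * σ q, f1bdd⟩
    intro z
    have h := this z
    rw [show (toLin f1 f1add f1smul) z = f1 z from rfl,
      show (toLin f1 f1add f1smul) 1 = f1 1 from rfl, hf11] at h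
    exact h
  set f2 : A → ℝ := fun z => e z - f1 z with hf2
  have f2add : ∀ z w, f2 (z + w) = f2 z + f2 w := by
    intro z w; rw [hf2]; simp only; rw [h1, f1add]; ring
  have f2smul : ∀ (r : ℝ) (z : A), f2 (r • z) = r * f2 z := by
    intro r z; rw [hf2]; simp only; rw [h2, f1smul]; ring
  have f2eq : ∀ z, f2 z = e ((1 - q) * z) := by
    intro z
    have : (1 - q) * z = z - q * z := by ring
    rw [this, ← hEe, map_sub, hEe, hEe, hf2]
  have f2pos : ∀ m ∈ M, 0 ≤ f2 m := by
    intro m hm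
    rw [f2eq]
    exact hcl _ (h1qM m hm)
  have f2bdd : ∀ z, |f2 z| ≤ (ε⁻¹ + ε⁻¹ * σ q) * σ z := by
    intro z
    calc |f2 z| ≤ |e z| + |f1 z| := by rw [hf2]; exact abs_sub _ _
    _ ≤ ε⁻¹ * σ z + (ε⁻¹ * σ q) * σ z := add_le_add (h5 z) (f1bdd z)
    _ = (ε⁻¹ + ε⁻¹ * σ q) * σ z := by ring
  have hf21 : f2 1 = 1 - t := by
    show e 1 - f1 1 = 1 - t
    rw [h3, hf11]
  have hF2 : ∀ z, |f2 z| ≤ ε⁻¹ * (1 - t) * σ z := by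
    have := norm_bound σ hε hball' (toLin f2 f2add f2smul) f2pos ⟨ε⁻¹ + ε⁻¹ * σ q, f2bdd⟩
    intro z
    have h := this z
    rw [show (toLin f2 f2add f2smul) z = f2 z from rfl,
      show (toLin f2 f2add f2smul) 1 = f2 1 from rfl, hf21] at h
    exact h
  -- key claim
  have hqmul : ∀ z, e (q * z) = t * e z := by
    rcases eq_or_lt_of_le ht0 with ht0' | ht0'
    · -- t = 0
      intro z
      have hb := hF1 z
      rw [← ht0'] at hb
      simp only [mul_zero, zero_mul] at hb
      have hz0 : f1 z = 0 := abs_eq_zero.mp (le_antisymm hb (abs_nonneg _))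
      calc e (q * z) = f1 z := rfl
      _ = 0 := hz0
      _ = t * e z := by rw [← ht0', zero_mul]
    rcases eq_or_lt_of_le ht1 with ht1' | ht1'
    · -- t = 1
      intro z
      have := hF2 z
      rw [ht1'] at this
      simp only [sub_self, mul_zero, zero_mul] at this
      have h0 : f2 z = 0 := abs_eq_zero.mp (le_antisymm this (abs_nonneg _))
      have h0' : e z - e (q * z) = 0 := h0
      have heqz : e (q * z) = e z := by linarith
      rw [heqz, ht1', one_mul]
    · -- 0 < t < 1
      set g1 : A → ℝ := fun z => t⁻¹ * f1 z with hg1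
      set g2 : A → ℝ := fun z => (1 - t)⁻¹ * f2 z with hg2
      have hg1K : g1 ∈ KSet σ M ε⁻¹ := by
        refine ⟨fun z w => by rw [hg1]; simp only; rw [f1add]; ring,
          fun r z => by rw [hg1]; simp only; rw [f1smul]; ring,
          ?_, ?_, ?_⟩
        · show t⁻¹ * f1 1 = 1
          rw [hf11]
          exact inv_mul_cancel₀ (ne_of_gt ht0')
        · intro m hm
          exact mul_nonneg (by positivity) (f1pos m hm)
        · intro z
          rw [hg1]; simp only
          rw [abs_mul, abs_of_pos (by positivity : (0:ℝ) < t⁻¹)]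
          calc t⁻¹ * |f1 z| ≤ t⁻¹ * (ε⁻¹ * t * σ z) :=
                mul_le_mul_of_nonneg_left (hF1 z) (by positivity)
          _ = ε⁻¹ * σ z := by field_simp
      have hg2K : g2 ∈ KSet σ M ε⁻¹ := by
        have h1t : (0:ℝ) < 1 - t := by linarith
        refine ⟨fun z w => by rw [hg2]; simp only; rw [f2add]; ring,
          fun r z => by rw [hg2]; simp only; rw [f2smul]; ring,
          ?_, ?_, ?_⟩
        · show (1 - t)⁻¹ * f2 1 = 1
          rw [hf21]
          exact inv_mul_cancel₀ (ne_of_gt h1t)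
        · intro m hm
          exact mul_nonneg (by positivity) (f2pos m hm)
        · intro z
          rw [hg2]; simp only
          rw [abs_mul, abs_of_pos (by positivity : (0:ℝ) < (1-t)⁻¹)]
          calc (1-t)⁻¹ * |f2 z| ≤ (1-t)⁻¹ * (ε⁻¹ * (1 - t) * σ z) :=
                mul_le_mul_of_nonneg_left (hF2 z) (by positivity)
          _ = ε⁻¹ * σ z := by field_simp
      have hseg : e ∈ openSegment ℝ g1 g2 := by
        refine ⟨t, 1 - t, ht0', by linarith, by ring, ?_⟩
        funext z
        simp only [Pi.add_apply, Pi.smul_apply, smul_eq_mul, hg1, hg2]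
        have h1t : (1 - t) ≠ 0 := by intro h; rw [sub_eq_zero] at h; exact (ne_of_lt ht1') h.symm
        field_simp
        rw [hf2]
        ring
      have := hex g1 hg1K g2 hg2K hseg
      intro z
      have hgz := congr_fun this.1 z
      rw [hg1] at hgz
      simp only at hgz
      have : f1 z = t * e z := by
        rw [← hgz]
        field_simp
      exact this
  -- divide by s
  have hqx : e (q * x) = t * e x := hqmul x
  have hq1 : e (q * x) = s * e (p2 * x) := by
    rw [hq, smul_mul_assoc, ← hEe, map_smul, hEe, smul_eq_mul]
  have hq2 : t = s * e p2 := by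
    rw [htdef, hq, ← hEe, map_smul, hEe, smul_eq_mul]
  rw [hq1, hq2] at hqx
  have := mul_left_cancel₀ (ne_of_gt hs0) (by linarith [hqx] : s * e (p2 * x) = s * (e p2 * e x))
  exact this

end ExtremeMul

section PolyStep

variable {A : Type*} [CommRing A] [Algebra ℝ A]

theorem extreme_mul (σ : Seminorm ℝ A) (hσ : ∀ a b : A, σ (a * b) ≤ σ a * σ b)
    {d : ℕ} (hd : 0 < d) {M : Set A} (hM : IsPowerModule d M)
    {ε : ℝ} (hε : 0 < ε)
    (hball : ∀ x : A, σ x ≤ ε → ∀ m ∈ M, (1 - x) * m ∈ @closure A (seminormTopology σ) M)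
    {e : A → ℝ} (he : e ∈ Set.extremePoints ℝ (KSet σ M ε⁻¹)) :
    ∀ b x : A, e (b * x) = e b * e x := by
  classical
  have hkey := extreme_key σ hσ hd hM hε hball he
  rw [mem_extremePoints] at he
  obtain ⟨⟨h1, h2, h3, h4, h5⟩, -⟩ := he
  set E : A →ₗ[ℝ] ℝ := toLin e h1 h2 with hE
  have hEe : ∀ z, E z = e z := fun z => rfl
  have e_nat : ∀ (n : ℕ) (z : A), e ((n : A) * z) = (n : ℝ) * e z := by
    intro n z
    have hcast : ((n : A)) * z = ((n : ℝ)) • z := by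
      rw [← nsmul_eq_mul, ← Nat.cast_smul_eq_nsmul ℝ]
    rw [hcast, h2]
  intro b x
  set co : ℕ → ℝ := fun j => (((2*d).choose j : ℕ) : ℝ) * (e (b^j * x) - e (b^j) * e x)
    with hco
  have hexp : ∀ t : ℝ, (1 + t • b : A) ^ (2*d)
      = ∑ j ∈ Finset.range (2*d+1), t ^ j • (b ^ j * (((2*d).choose j : ℕ) : A)) := by
    intro t
    have h := add_pow (t • b) (1 : A) (2*d)
    rw [add_comm (t • b) (1 : A)] at h
    rw [h]
    refine Finset.sum_congr rfl (fun j hj => ?_)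
    rw [one_pow, mul_one, smul_pow, smul_mul_assoc]
  have hL : ∀ t : ℝ, e ((1 + t • b : A) ^ (2*d) * x)
      = ∑ j ∈ Finset.range (2*d+1), t ^ j * ((((2*d).choose j : ℕ) : ℝ) * e (b^j * x)) := by
    intro t
    rw [hexp t, Finset.sum_mul]
    have hterm : ∀ j, (t ^ j • (b ^ j * (((2*d).choose j : ℕ) : A))) * x
        = t ^ j • ((((2*d).choose j : ℕ) : A) * (b ^ j * x)) := by
      intro j
      rw [smul_mul_assoc]
      congr 1
      ring
    calc e (∑ j ∈ Finset.range (2*d+1), (t ^ j • (b ^ j * (((2*d).choose j : ℕ) : A))) * x)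
        = E (∑ j ∈ Finset.range (2*d+1), (t ^ j • (b ^ j * (((2*d).choose j : ℕ) : A))) * x) :=
          (hEe _).symm
    _ = ∑ j ∈ Finset.range (2*d+1),
          E ((t ^ j • (b ^ j * (((2*d).choose j : ℕ) : A))) * x) := map_sum E _ _
    _ = ∑ j ∈ Finset.range (2*d+1), t ^ j * ((((2*d).choose j : ℕ) : ℝ) * e (b^j * x)) := by
        refine Finset.sum_congr rfl (fun j hj => ?_)
        rw [hterm j, hEe, h2, e_nat]
  have hR : ∀ t : ℝ, e ((1 + t • b : A) ^ (2*d))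
      = ∑ j ∈ Finset.range (2*d+1), t ^ j * ((((2*d).choose j : ℕ) : ℝ) * e (b^j)) := by
    intro t
    rw [hexp t]
    calc e (∑ j ∈ Finset.range (2*d+1), t ^ j • (b ^ j * (((2*d).choose j : ℕ) : A)))
        = E (∑ j ∈ Finset.range (2*d+1), t ^ j • (b ^ j * (((2*d).choose j : ℕ) : A))) :=
          (hEe _).symm
    _ = ∑ j ∈ Finset.range (2*d+1), E (t ^ j • (b ^ j * (((2*d).choose j : ℕ) : A))) :=
          map_sum E _ _
    _ = ∑ j ∈ Finset.range (2*d+1), t ^ j * ((((2*d).choose j : ℕ) : ℝ) * e (b^j)) := by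
        refine Finset.sum_congr rfl (fun j hj => ?_)
        rw [hEe, h2]
        congr 1
        rw [mul_comm (b ^ j) _, e_nat]
  set P : Polynomial ℝ :=
    ∑ j ∈ Finset.range (2*d+1), Polynomial.C (co j) * Polynomial.X ^ j with hP
  have heval : ∀ t : ℝ, P.eval t = 0 := by
    intro t
    have hk := hkey (1 + t • b) x
    rw [hL t, hR t, Finset.sum_mul] at hk
    rw [hP, Polynomial.eval_finset_sum]
    simp only [Polynomial.eval_mul, Polynomial.eval_C, Polynomial.eval_pow, Polynomial.eval_X]
    have : ∑ j ∈ Finset.range (2*d+1), co j * t ^ j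
        = ∑ j ∈ Finset.range (2*d+1), (t ^ j * ((((2*d).choose j : ℕ) : ℝ) * e (b^j * x))
            - t ^ j * ((((2*d).choose j : ℕ) : ℝ) * e (b^j)) * e x) := by
      refine Finset.sum_congr rfl (fun j hj => ?_)
      rw [hco]
      ring
    rw [this, Finset.sum_sub_distrib, hk]
    ring
  have hP0 : P = 0 := Polynomial.zero_of_eval_zero P heval
  have hco1 : co 1 = 0 := by
    have hcoeff := congrArg (fun p : Polynomial ℝ => p.coeff 1) hP0
    simp only [hP, Polynomial.finset_sum_coeff, Polynomial.coeff_C_mul,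
      Polynomial.coeff_X_pow, Polynomial.coeff_zero, mul_ite, mul_one, mul_zero] at hcoeff
    rw [Finset.sum_ite_eq (Finset.range (2*d+1)) 1 (fun j => co j)] at hcoeff
    have hmem : 1 ∈ Finset.range (2*d+1) := Finset.mem_range.mpr (by omega)
    rw [if_pos hmem] at hcoeff
    exact hcoeff
  rw [hco] at hco1
  simp only [pow_one, Nat.choose_one_right] at hco1
  have h2d : ((2*d : ℕ) : ℝ) ≠ 0 := by positivity
  have := mul_eq_zero.mp hco1
  rcases this with h | h
  · exact absurd h h2d
  · linarith

end PolyStep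

/-- **Closure theorem for submultiplicative seminormed algebras.** For a submultiplicative
seminorm `σ` on `A` and a `2d`-power module `M` of `A` (not necessarily Archimedean), the
`σ`-closure of `M` equals `Pos(X_M ∩ sp(σ))`, the set of elements of `A` whose Gelfand
transform is non-negative on the `σ`-continuous characters which are non-negative on `M`. -/
theorem closure_powerModule_eq_pos (A : Type*) [CommRing A] [Algebra ℝ A]
    (σ : Seminorm ℝ A) (hσ : ∀ a b : A, σ (a * b) ≤ σ a * σ b)
    (d : ℕ) (hd : 0 < d) (M : Set A) (hM : IsPowerModule d M) :
    @closure A (seminormTopology σ) M =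
      {a : A | ∀ α : A →ₐ[ℝ] ℝ,
        (∀ m ∈ M, 0 ≤ α m) → @Continuous A ℝ (seminormTopology σ) inferInstance ⇑α →
          0 ≤ α a} := by
  letI := seminormTopology σ
  have hp := withSeminorms_st σ
  haveI : IsTopologicalAddGroup A := hp.topologicalAddGroup
  haveI : ContinuousSMul ℝ A := hp.continuousSMul
  haveI : ContinuousConstSMul ℝ A := ContinuousSMul.continuousConstSMul
  haveI : LocallyConvexSpace ℝ A := hp.toLocallyConvexSpace
  apply Set.Subset.antisymm
  · -- closure M ⊆ Pos
    have hclosed : IsClosed {a : A | ∀ α : A →ₐ[ℝ] ℝ,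
        (∀ m ∈ M, 0 ≤ α m) → Continuous ⇑α → 0 ≤ α a} := by
      have hrw : {a : A | ∀ α : A →ₐ[ℝ] ℝ,
          (∀ m ∈ M, 0 ≤ α m) → Continuous ⇑α → 0 ≤ α a}
          = ⋂ (α : A →ₐ[ℝ] ℝ), ⋂ (_ : ∀ m ∈ M, 0 ≤ α m), ⋂ (_ : Continuous ⇑α),
              (⇑α) ⁻¹' Set.Ici 0 := by
        ext z
        simp only [Set.mem_setOf_eq, Set.mem_iInter, Set.mem_preimage, Set.mem_Ici]
      rw [hrw]
      exact isClosed_iInter fun α => isClosed_iInter fun _ => isClosed_iInter fun hc =>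
        IsClosed.preimage hc isClosed_Ici
    exact closure_minimal (fun m hm α hpos _ => hpos m hm) hclosed
  · -- Pos ⊆ closure M
    intro a ha
    by_contra hnot
    obtain ⟨ε, hε, hball⟩ := ball_lemma σ hσ hd hM
    have hball' : ∀ x : A, σ x ≤ ε → (1 - x) ∈ closure M := by
      intro x hx
      have := hball x hx 1 hM.1
      rwa [mul_one] at this
    have hMconv : Convex ℝ M := pm_convex hM hd
    obtain ⟨f, u, hfu, hua⟩ :=
      geometric_hahn_banach_closed_point hMconv.closure isClosed_closure hnot
    have h0M : (0 : A) ∈ closure M := subset_closure (pm_zero_mem hM hd)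
    have hu0 : 0 < u := by
      have := hfu 0 h0M
      simpa using this
    have hfM : ∀ m ∈ M, f m ≤ 0 := by
      intro m hm
      by_contra hpos'
      push_neg at hpos'
      have ht : (0:ℝ) < (u + 1) / f m := by positivity
      have hlt : f (((u + 1) / f m) • m) < u :=
        hfu _ (subset_closure (pm_smul_mem hM hd ht.le hm))
      rw [map_smul, smul_eq_mul, div_mul_cancel₀ _ (ne_of_gt hpos')] at hlt
      linarith
    set L0 : A →ₗ[ℝ] ℝ := -((f : A →L[ℝ] ℝ) : A →ₗ[ℝ] ℝ) with hL0
    have hL0app : ∀ z, L0 z = -(f z) := fun z => rfl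
    have hL0pos : ∀ m ∈ M, 0 ≤ L0 m := by
      intro m hm
      rw [hL0app]
      linarith [hfM m hm]
    have hL0cont : Continuous L0 := f.continuous.neg
    have hL0bdd : ∃ C : ℝ, ∀ x, |L0 x| ≤ C * σ x := bound_of_continuous σ L0 hL0cont
    have hnorm := norm_bound σ hε hball' L0 hL0pos hL0bdd
    have hL0a : L0 a < 0 := by
      rw [hL0app]
      linarith
    have hL01 : 0 < L0 1 := by
      rcases lt_or_eq_of_le (hL0pos 1 hM.1) with h | h
      · exact h
      · exfalso
        have := hnorm a
        rw [← h, mul_zero, zero_mul] at this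
        have : L0 a = 0 := abs_eq_zero.mp (le_antisymm this (abs_nonneg _))
        linarith
    set L : A → ℝ := fun z => (L0 1)⁻¹ * L0 z with hLdef
    have hLK : L ∈ KSet σ M ε⁻¹ := by
      refine ⟨fun z w => by rw [hLdef]; simp only; rw [map_add]; ring,
        fun r z => by rw [hLdef]; simp only; rw [map_smul, smul_eq_mul]; ring,
        by rw [hLdef]; simp only; exact inv_mul_cancel₀ (ne_of_gt hL01),
        fun m hm => mul_nonneg (by positivity) (hL0pos m hm), ?_⟩
      intro z
      rw [hLdef]
      simp only
      rw [abs_mul, abs_of_pos (by positivity : (0:ℝ) < (L0 1)⁻¹)]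
      calc (L0 1)⁻¹ * |L0 z| ≤ (L0 1)⁻¹ * (ε⁻¹ * L0 1 * σ z) :=
            mul_le_mul_of_nonneg_left (hnorm z) (by positivity)
      _ = ε⁻¹ * σ z := by field_simp
    obtain ⟨e, heK, hemin, heext⟩ := exists_extreme_min σ M ε⁻¹ ⟨L, hLK⟩ a
    have hLa : L a < 0 := by
      rw [hLdef]
      simp only
      exact mul_neg_of_pos_of_neg (by positivity) hL0a
    have hea : e a < 0 := lt_of_le_of_lt (hemin L hLK) hLa
    have hmul := extreme_mul σ hσ hd hM hε hball heext
    obtain ⟨h1, h2, h3, h4, h5⟩ := heK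
    have h0 : e 0 = 0 := by
      have := h1 0 0
      rw [add_zero] at this
      linarith
    let rh : A →+* ℝ :=
      { toFun := e, map_one' := h3, map_mul' := hmul, map_zero' := h0, map_add' := h1 }
    let α : A →ₐ[ℝ] ℝ :=
      { rh with
        commutes' := fun r => by
          show e (algebraMap ℝ A r) = algebraMap ℝ ℝ r
          rw [Algebra.algebraMap_eq_smul_one, h2, h3, mul_one]
          rfl }
    have hαe : ⇑α = e := rfl
    have hcont : Continuous ⇑α := by
      rw [hαe]
      exact continuous_of_bound σ (toLin e h1 h2) ε⁻¹ h5
    have hpos : ∀ m ∈ M, 0 ≤ α m := fun m hm => h4 m hm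
    have := ha α hpos hcont
    rw [show α a = e a from rfl] at this
    linarith
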